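/- Let n ≥ 3 and let w be a fully commutative element of the Coxeter group W of type H_{n-1}. Then in any reduced expression for w, every bilateral occurrence of a letter is an occurrence of the generator s_1. -/

import Mathlib

open CoxeterSystem List LaurentPolynomial

noncomputable section

/-! ### Coxeter systems of types `H` and `B` -/

/-- Symmetric bond function: index `i` corresponds to the generator `s_{i+1}`; the bond
between indices `0`,`1` (i.e. `s₁`,`s₂`) equals `c`, consecutive indices otherwise have
bond `3`, and all other pairs commute. -/
def genM (c i j : ℕ) : ℕ :=
  if i = j then 1
  else if i + 1 = j ∨ j + 1 = i then (if i = 0 ∨ j = 0 then c else 3)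
  else 2

lemma genM_symm (c i j : ℕ) : genM c i j = genM c j i := by
  unfold genM; split_ifs <;> omega

lemma genM_diag (c i : ℕ) : genM c i i = 1 := by unfold genM; simp

lemma genM_ne_one (c i j : ℕ) (hc : 3 ≤ c) (h : i ≠ j) : genM c i j ≠ 1 := by
  unfold genM; split_ifs <;> omega

/-- The Coxeter matrix on `k` generators, with first bond `c` (type `H` for `c = 5`,
type `B` for `c = 4`). -/
def Cmat (c k : ℕ) (hc : 3 ≤ c) : CoxeterMatrix (Fin k) where
  M := Matrix.of fun i j => genM c i j
  isSymm := by ext i j; exact genM_symm c j i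
  diagonal := fun i => genM_diag c i
  off_diagonal := fun i j h => genM_ne_one c i j hc (fun hh => h (Fin.ext hh))

/-- The Coxeter matrix of type `H_k`. -/
abbrev Hmat (k : ℕ) : CoxeterMatrix (Fin k) := Cmat 5 k (by norm_num)

/-- The Coxeter matrix of type `B_k`. -/
abbrev Bmat (k : ℕ) : CoxeterMatrix (Fin k) := Cmat 4 k (by norm_num)

/-- `w` is fully commutative: it has no reduced factorization `w = x₁ ⬝ w_{st} ⬝ x₂`,
where `w_{st}` is the longest element of a rank-2 parabolic subgroup `⟨s,t⟩` with
`m(s,t) ≥ 3`. -/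
def FC {B : Type*} {W : Type*} [Group W] {M : CoxeterMatrix B} (cs : CoxeterSystem M W)
    (w : W) : Prop :=
  ¬ ∃ (x₁ x₂ : W) (i j : B), 3 ≤ M i j ∧
      w = x₁ * cs.wordProd (alternatingWord i j (M i j)) * x₂ ∧
      cs.length w = cs.length x₁ + cs.length (cs.wordProd (alternatingWord i j (M i j)))
        + cs.length x₂

/-- Bruhat–Chevalley order: some reduced expression for `w` contains a subword which is a
reduced expression for `x`. -/
def BruhatLE {B : Type*} {W : Type*} [Group W] {M : CoxeterMatrix B}
    (cs : CoxeterSystem M W) (x w : W) : Prop :=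
  ∃ ω ω' : List B, cs.IsReduced ω ∧ cs.wordProd ω = w ∧
    ω'.Sublist ω ∧ cs.IsReduced ω' ∧ cs.wordProd ω' = x

/-! ### Commutations acting on occurrences of letters -/

variable {B : Type*}

/-- One commutation move: swap the letters in positions `k` and `k+1`, which must commute. -/
def SwapStep (M : CoxeterMatrix B) (ω ω' : List B) (k : ℕ) : Prop :=
  ∃ a b : B, ω[k]? = some a ∧ ω[k+1]? = some b ∧ M a b = 2 ∧
    ω' = (ω.set k b).set (k+1) a

/-- Effect of the swap at position `k` on a tracked position. -/
def swapAt (k p : ℕ) : ℕ := if p = k then k + 1 else if p = k + 1 then k else p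

/-- A sequence of commutation moves, together with the induced map on positions
(tracking occurrences of letters). -/
inductive CommPath (M : CoxeterMatrix B) : List B → List B → (ℕ → ℕ) → Prop
  | refl (ω : List B) : CommPath M ω ω id
  | step {ω ω' ω'' : List B} {f : ℕ → ℕ} {k : ℕ} :
      CommPath M ω ω' f → SwapStep M ω' ω'' k → CommPath M ω ω'' (swapAt k ∘ f)

/-- The occurrence at position `p` of `ω` is internal: after commutations it is the middle
term of a consecutive subsequence `s_q s_p s_q` with `m(s_p, s_q) ≥ 3`. -/
def Internal (M : CoxeterMatrix B) (ω : List B) (p : ℕ) : Prop :=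
  ∃ (ω' : List B) (f : ℕ → ℕ) (a q : B), CommPath M ω ω' f ∧ 1 ≤ f p ∧
    ω'[f p]? = some a ∧ ω'[f p - 1]? = some q ∧ ω'[f p + 1]? = some q ∧ 3 ≤ M a q

/-- The occurrence at position `p` of `ω` is lateral with respect to the internal
occurrence at position `r`. -/
def LateralWrt (M : CoxeterMatrix B) (ω : List B) (p r : ℕ) : Prop :=
  ¬ Internal M ω p ∧ Internal M ω r ∧
    ∃ (ω' : List B) (f : ℕ → ℕ) (a q : B), CommPath M ω ω' f ∧
      (f p + 1 = f r ∨ f p = f r + 1) ∧ 1 ≤ f r ∧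
      ω'[f r]? = some q ∧ ω'[f r - 1]? = some a ∧ ω'[f r + 1]? = some a ∧
      ω'[f p]? = some a ∧ 3 ≤ M a q

/-- Lateral occurrence. -/
def Lateral (M : CoxeterMatrix B) (ω : List B) (p : ℕ) : Prop := ∃ r, LateralWrt M ω p r

/-- Bilateral occurrence: lateral with respect to two different internal occurrences. -/
def Bilateral (M : CoxeterMatrix B) (ω : List B) (p : ℕ) : Prop :=
  ∃ r₁ r₂, r₁ ≠ r₂ ∧ LateralWrt M ω p r₁ ∧ LateralWrt M ω p r₂

/-- The occurrence at position `p` is internal and lies in the set `R`: after commutations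
it occurs in a subsequence `t s t` whose rightmost occurrence of `t` is bilateral. -/
def InRSet (M : CoxeterMatrix B) (ω : List B) (p : ℕ) : Prop :=
  Internal M ω p ∧
    ∃ (ω' : List B) (f : ℕ → ℕ) (r : ℕ) (a q : B), CommPath M ω ω' f ∧
      f r = f p + 1 ∧ 1 ≤ f p ∧
      ω'[f p]? = some q ∧ ω'[f p - 1]? = some a ∧ ω'[f p + 1]? = some a ∧ 3 ≤ M q a ∧
      Bilateral M ω r

/-- A word is right justified if every occurrence in `R` has the letter immediately to its
left lateral or internal, and every internal occurrence not in `R` has the letters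
immediately to its left and right lateral or internal. -/
def RightJustified (M : CoxeterMatrix B) (ω : List B) : Prop :=
  ∀ p : ℕ,
    (InRSet M ω p → 1 ≤ p ∧ (Lateral M ω (p-1) ∨ Internal M ω (p-1))) ∧
    (Internal M ω p → ¬ InRSet M ω p →
      1 ≤ p ∧ p + 1 < ω.length ∧ (Lateral M ω (p-1) ∨ Internal M ω (p-1)) ∧
      (Lateral M ω (p+1) ∨ Internal M ω (p+1)))

/-- A bad occurrence of `s₂` (Remark 3.1.11): a lateral occurrence which after commutations
appears as the overscored letter in `s₃ s₁ s₂ s₁ s̄₂ s₃` or `s₃ s̄₂ s₁ s₂ s₁ s₃`. -/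
def BadOcc (M : CoxeterMatrix B) (s1 s2 : B) (ω : List B) (p : ℕ) : Prop :=
  Lateral M ω p ∧
    ∃ (ω' : List B) (f : ℕ → ℕ) (s3 : B) (u v : List B), CommPath M ω ω' f ∧ M s2 s3 = 3 ∧
      ((ω' = u ++ [s3, s1, s2, s1, s2, s3] ++ v ∧ f p = u.length + 4) ∨
       (ω' = u ++ [s3, s2, s1, s2, s1, s3] ++ v ∧ f p = u.length + 1))

/-! ### Blocks for the canonical decomposition of Lemma 3.2.5 -/

/-- Blocks: a plain generator, or one of the six forms of maximal contiguous subsequences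
of internal and lateral letters. -/
inductive Blk (B : Type*) where
  | gen (i : B)
  | f1 | f2 | f3 | f4 | f5 | f6

namespace Blk

/-- The underlying word of a block (`s1`, `s2` are the first two Coxeter generators). -/
def word (s1 s2 : B) : Blk B → List B
  | .gen i => [i]
  | .f1 => [s1, s2]
  | .f2 => [s1, s2, s1]
  | .f3 => [s2, s1, s2]
  | .f4 => [s1, s2, s1, s2]
  | .f5 => [s2, s1, s2]
  | .f6 => [s2, s1, s2, s1]

/-- The positions within each block that are internal. -/
def internalPos : Blk B → List ℕ
  | .gen _ => []
  | .f1 => [1]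
  | .f2 => [1]
  | .f3 => [1]
  | .f4 => [1, 2]
  | .f5 => [1, 2]
  | .f6 => [1, 2]

def isGen : Blk B → Prop
  | .gen _ => True
  | _ => False

/-- Blocks allowed in type `B`: only the forms (1), (2), (3). -/
def isBForm : Blk B → Prop
  | .gen _ => True
  | .f1 => True
  | .f2 => True
  | .f3 => True
  | _ => False

/-- The element of the Temperley–Lieb algebra associated to a block (Definition 3.2.6). -/
def elt {R : Type*} [Ring R] (b1 b2 : R) (g : B → R) : Blk B → R
  | .gen i => g i
  | .f1 => b1 * b2 - 1
  | .f2 => b1 * b2 * b1 - b1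
  | .f3 => b2 * b1 * b2 - b2
  | .f4 => b1 * b2 * b1 * b2 - 2 * (b1 * b2)
  | .f5 => b2 * b1 * b2 - 2 * b2
  | .f6 => b2 * b1 * b2 * b1 - 2 * (b2 * b1)

end Blk

/-- The word spelled by a list of blocks. -/
def blocksWord (s1 s2 : B) (bl : List (Blk B)) : List B :=
  (bl.map (Blk.word s1 s2)).flatten

/-- `bl` is a decomposition of `w ∈ W_c` as in Lemma 3.2.5: the word spelled by the blocks
is a reduced expression for `w` (right justified when `rj = true`), all blocks satisfy `ok`,
the form blocks are maximal (no two adjacent), the occurrences in generator blocks are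
neither internal nor lateral, and within the form blocks the internal occurrences are
exactly the designated ones and all others are lateral. -/
def IsDecomp {W : Type*} [Group W] {M : CoxeterMatrix B} (cs : CoxeterSystem M W)
    (s1 s2 : B) (rj : Bool) (ok : Blk B → Prop) (w : W) (bl : List (Blk B)) : Prop :=
  cs.IsReduced (blocksWord s1 s2 bl) ∧ cs.wordProd (blocksWord s1 s2 bl) = w ∧
  (rj = true → RightJustified M (blocksWord s1 s2 bl)) ∧
  (∀ b ∈ bl, ok b) ∧
  (∀ (j : ℕ) (b b' : Blk B), bl[j]? = some b → bl[j+1]? = some b' → b.isGen ∨ b'.isGen) ∧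
  (∀ (j : ℕ) (b : Blk B) (t : ℕ), bl[j]? = some b → t < (Blk.word s1 s2 b).length →
    (Internal M (blocksWord s1 s2 bl) ((blocksWord s1 s2 (bl.take j)).length + t)
        ↔ t ∈ b.internalPos) ∧
    (Lateral M (blocksWord s1 s2 bl) ((blocksWord s1 s2 (bl.take j)).length + t)
        ↔ (¬ b.isGen ∧ t ∉ b.internalPos)))

/-! ### The generalized Temperley–Lieb algebras -/

/-- The ground ring `A = ℤ[v,v⁻¹]`. -/
abbrev LA : Type := LaurentPolynomial ℤ

/-- `v`. -/
def vv : LA := T 1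

/-- `v⁻¹`. -/
def vinv : LA := T (-1)

/-- `δ = v + v⁻¹`. -/
def δδ : LA := vv + vinv

/-- A Laurent polynomial lies in `ℕ[v, v⁻¹]`, i.e. has non-negative coefficients. -/
def IsNonnegLP (p : LA) : Prop := ∀ z : ℤ, 0 ≤ p.coeff z

/-- Defining relations for the generalized Temperley–Lieb algebra; `c = 5` gives type `H`
and `c = 4` gives type `B`.  Generator index `i` corresponds to `b_{i+1}`. -/
inductive TLrel (c k : ℕ) : FreeAlgebra LA (Fin k) → FreeAlgebra LA (Fin k) → Prop
  | sq (i : Fin k) : TLrel c k (.ι LA i * .ι LA i) (δδ • .ι LA i)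
  | comm (i j : Fin k) (h : (i:ℕ) + 1 < j ∨ (j:ℕ) + 1 < i) :
      TLrel c k (.ι LA i * .ι LA j) (.ι LA j * .ι LA i)
  | braid (i j : Fin k) (h : (i:ℕ) + 1 = j ∨ (j:ℕ) + 1 = i) (hi : 1 ≤ (i:ℕ)) (hj : 1 ≤ (j:ℕ)) :
      TLrel c k (.ι LA i * .ι LA j * .ι LA i) (.ι LA i)
  | hrel (i j : Fin k) (h : ((i:ℕ) = 0 ∧ (j:ℕ) = 1) ∨ ((i:ℕ) = 1 ∧ (j:ℕ) = 0)) (hc : c = 5) :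
      TLrel c k (.ι LA i * .ι LA j * .ι LA i * .ι LA j * .ι LA i)
        ((3 : LA) • (.ι LA i * .ι LA j * .ι LA i) - .ι LA i)
  | brel (i j : Fin k) (h : ((i:ℕ) = 0 ∧ (j:ℕ) = 1) ∨ ((i:ℕ) = 1 ∧ (j:ℕ) = 0)) (hc : c = 4) :
      TLrel c k (.ι LA i * .ι LA j * .ι LA i * .ι LA j) ((2 : LA) • (.ι LA i * .ι LA j))

/-- The generalized Temperley–Lieb algebra (type `H` for `c = 5`, type `B` for `c = 4`). -/
abbrev TL (c k : ℕ) : Type := RingQuot (TLrel c k)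

/-- The generator `b_{i+1}` of `TL c k`. -/
def bgen (c k : ℕ) (i : Fin k) : TL c k := RingQuot.mkAlgHom LA _ (FreeAlgebra.ι LA i)

/-- The monomial `b_{i_1} ⋯ b_{i_l}` attached to a word. -/
def bword (c k : ℕ) (ω : List (Fin k)) : TL c k := (ω.map (bgen c k)).prod

/-- The element `t̃ONE = (b_{i_1} - v⁻¹) ⋯ (b_{i_l} - v⁻¹)` attached to a word. -/
def tword (c k : ℕ) (ω : List (Fin k)) : TL c k :=
  (ω.map (fun i => bgen c k i - algebraMap LA (TL c k) vinv)).prod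

/-- The product of the Temperley–Lieb elements of a list of blocks (giving `f_w` when the
blocks form a decomposition of `w` as in Lemma 3.2.5). -/
def blocksElt (c k : ℕ) (bl : List (Blk (Fin k))) (h1 h2 : Fin k) : TL c k :=
  (bl.map (Blk.elt (bgen c k h1) (bgen c k h2) (bgen c k))).prod

/-- `r` assigns to every element satisfying `P` (e.g. every fully commutative element)
a reduced expression. -/
def IsRedChoice {W : Type*} [Group W] {M : CoxeterMatrix B} (cs : CoxeterSystem M W)
    (P : W → Prop) (r : W → List B) : Prop :=
  ∀ w : W, P w → cs.IsReduced (r w) ∧ cs.wordProd (r w) = w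

/-- The `ℤ[v⁻¹]`-lattice spanned by the elements `gen (r w)`, for `w` satisfying `P`;
realized as the `ℤ`-span of all the `v⁻ʲ`-multiples of these elements. -/
def Latt {W : Type*} (c k : ℕ) (P : W → Prop) (r : W → List (Fin k))
    (gen : List (Fin k) → TL c k) : Submodule ℤ (TL c k) :=
  Submodule.span ℤ {x : TL c k | ∃ (j : ℕ) (w : W), P w ∧ x = (T (-(j:ℤ)) : LA) • gen (r w)}

/-- `bar` is a bar involution: a ring homomorphism fixing each generator `b_i` and acting
on scalars by `v ↦ v⁻¹`. -/
def IsBar (c k : ℕ) (bar : TL c k →+* TL c k) : Prop :=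
  (∀ i : Fin k, bar (bgen c k i) = bgen c k i) ∧
  (∀ m : ℤ, bar (algebraMap LA (TL c k) (T m)) = algebraMap LA (TL c k) (T (-m)))

/-! ### auxiliary lemmas -/

section Aux

variable {M : CoxeterMatrix B}

lemma swapAt_swapAt (k x : ℕ) : swapAt k (swapAt k x) = x := by
  unfold _root_.swapAt; split_ifs <;> omega

lemma swapAt_lt_iff {k x y : ℕ} (hx : ¬(x = k ∧ y = k+1)) (hy : ¬(x = k+1 ∧ y = k)) :
    (swapAt k x < swapAt k y ↔ x < y) := by
  unfold _root_.swapAt; split_ifs <;> omega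

namespace SwapStep

lemma len {ω ω' : List B} {k : ℕ} (h : SwapStep M ω ω' k) : ω'.length = ω.length := by
  obtain ⟨a, b, _, _, _, rfl⟩ := h; simp

lemma track {ω ω' : List B} {k : ℕ} (h : SwapStep M ω ω' k) (x : ℕ) :
    ω'[swapAt k x]? = ω[x]? := by
  obtain ⟨a, b, ha, hb, hM, rfl⟩ := h
  have hk : k < ω.length := (List.getElem?_eq_some_iff.mp ha).1
  have hk1 : k + 1 < ω.length := (List.getElem?_eq_some_iff.mp hb).1
  unfold _root_.swapAt
  split_ifs with h1 h2
  · subst h1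
    rw [List.getElem?_set_self (by simpa using hk1), ha]
  · subst h2
    rw [List.getElem?_set_ne (by omega), List.getElem?_set_self hk, hb]
  · rw [List.getElem?_set_ne (by omega), List.getElem?_set_ne (by omega)]

lemma getk {ω ω' : List B} {k : ℕ} (h : SwapStep M ω ω' k) :
    ∃ a b : B, ω'[k]? = some b ∧ ω'[k+1]? = some a ∧ ω[k]? = some a ∧ ω[k+1]? = some b
      ∧ M a b = 2 := by
  obtain ⟨a, b, ha, hb, hM, rfl⟩ := h
  have hk : k < ω.length := (List.getElem?_eq_some_iff.mp ha).1
  have hk1 : k + 1 < ω.length := (List.getElem?_eq_some_iff.mp hb).1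
  exact ⟨a, b, by rw [List.getElem?_set_ne (by omega), List.getElem?_set_self hk],
    by rw [List.getElem?_set_self (by simpa using hk1)], ha, hb, hM⟩

end SwapStep

namespace CommPath

lemma len {ω ω' : List B} {f : ℕ → ℕ} (h : CommPath M ω ω' f) : ω'.length = ω.length := by
  induction h with
  | refl => rfl
  | step _ hs ih => rw [hs.len, ih]

lemma track {ω ω' : List B} {f : ℕ → ℕ} (h : CommPath M ω ω' f) (x : ℕ) :
    ω'[f x]? = ω[x]? := by
  induction h with
  | refl => rfl
  | step _ hs ih => rw [Function.comp_apply, hs.track, ih]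

lemma inv {ω ω' : List B} {f : ℕ → ℕ} (h : CommPath M ω ω' f) :
    ∃ g : ℕ → ℕ, (∀ x, g (f x) = x) ∧ (∀ x, f (g x) = x) := by
  induction h with
  | refl => exact ⟨id, fun _ => rfl, fun _ => rfl⟩
  | @step ωm ω₂ f₀ k hpath hs ih =>
      obtain ⟨g, hgl, hgr⟩ := ih
      exact ⟨g ∘ swapAt k, fun x => by simp [Function.comp_apply, swapAt_swapAt, hgl],
        fun x => by simp [Function.comp_apply, hgr, swapAt_swapAt]⟩

lemma trans {ω ω' ω'' : List B} {f g : ℕ → ℕ} (h : CommPath M ω ω' f)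
    (h' : CommPath M ω' ω'' g) : CommPath M ω ω'' (g ∘ f) := by
  induction h' with
  | refl => exact h
  | step _ hs ih => exact CommPath.step ih hs

lemma orderInv {ω ω' : List B} {f : ℕ → ℕ} (h : CommPath M ω ω' f) {u v : ℕ} {a b : B}
    (hu : ω[u]? = some a) (hv : ω[v]? = some b) (hab : M a b ≠ 2) :
    (f u < f v ↔ u < v) := by
  induction h with
  | refl => rfl
  | @step ωm ω₂ f₀ k hpath hs ih =>
      rw [Function.comp_apply, Function.comp_apply]
      obtain ⟨a₀, b₀, hkb, hka, hωa, hωb, hM2⟩ := hs.getk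
      rw [← ih]
      apply swapAt_lt_iff
      · rintro ⟨h1, h2⟩
        have e1 : ωm[f₀ u]? = some a := (hpath.track u).trans hu
        have e2 : ωm[f₀ v]? = some b := (hpath.track v).trans hv
        rw [h1, hωa] at e1
        rw [h2, hωb] at e2
        rw [Option.some.injEq] at e1 e2
        subst e1; subst e2
        exact hab hM2
      · rintro ⟨h1, h2⟩
        have e1 : ωm[f₀ u]? = some a := (hpath.track u).trans hu
        have e2 : ωm[f₀ v]? = some b := (hpath.track v).trans hv
        rw [h1, hωb] at e1
        rw [h2, hωa] at e2
        rw [Option.some.injEq] at e1 e2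
        subst e1; subst e2
        exact hab (hM2 ▸ (M.symmetric b₀ a₀))

end CommPath

lemma simple_comm {W : Type*} [Group W] (cs : CoxeterSystem M W) {a b : B} (h : M a b = 2) :
    cs.simple a * cs.simple b = cs.simple b * cs.simple a := by
  have h1 := cs.simple_mul_simple_pow a b
  rw [h, sq] at h1
  calc cs.simple a * cs.simple b = (cs.simple a * cs.simple b)⁻¹ :=
        (inv_eq_of_mul_eq_one_right h1).symm
    _ = cs.simple b * cs.simple a := by rw [mul_inv_rev, cs.inv_simple, cs.inv_simple]

lemma set_swap_wordProd {W : Type*} [Group W] (cs : CoxeterSystem M W) :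
    ∀ (ω : List B) (k : ℕ) (a b : B), ω[k]? = some a → ω[k+1]? = some b → M a b = 2 →
      cs.wordProd ((ω.set k b).set (k+1) a) = cs.wordProd ω := by
  intro ω
  induction ω with
  | nil => intro k a b ha _ _; simp at ha
  | cons x t ih =>
      intro k a b ha hb hM
      match k with
      | 0 =>
          match t with
          | [] => simp at hb
          | y :: t' =>
              have hax : x = a := by simpa using ha
              have hby : y = b := by simpa using hb
              subst hax; subst hby
              simp only [List.set_cons_zero, List.set_cons_succ,
                cs.wordProd_cons, ← mul_assoc]
              rw [simple_comm cs hM]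
      | k' + 1 =>
          rw [List.getElem?_cons_succ] at ha
          rw [show k' + 1 + 1 = (k' + 1) + 1 from rfl, List.getElem?_cons_succ] at hb
          show cs.wordProd (x :: (t.set k' b).set (k' + 1) a) = cs.wordProd (x :: t)
          rw [cs.wordProd_cons, cs.wordProd_cons, ih k' a b ha hb hM]

namespace CommPath

lemma wordProd {W : Type*} [Group W] (cs : CoxeterSystem M W) {ω ω' : List B} {f : ℕ → ℕ}
    (h : CommPath M ω ω' f) : cs.wordProd ω' = cs.wordProd ω := by
  induction h with
  | refl => rfl
  | @step ωm ω₂ f₀ k hpath hs ih =>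
      obtain ⟨a, b, ha, hb, hM, rfl⟩ := hs
      rw [set_swap_wordProd cs ωm k a b ha hb hM, ih]

lemma isReduced {W : Type*} [Group W] (cs : CoxeterSystem M W) {ω ω' : List B} {f : ℕ → ℕ}
    (h : CommPath M ω ω' f) (hred : cs.IsReduced ω) : cs.IsReduced ω' := by
  unfold CoxeterSystem.IsReduced at *
  rw [h.wordProd cs, h.len, hred]

end CommPath

/-- Bubbling a letter leftward past commuting letters. -/
lemma bubble {c : B} :
    ∀ (d : ℕ) (ω : List B) (i0 : ℕ), ω[i0+1+d]? = some c →
      (∀ i, i0 < i → i < i0+1+d → ∃ x, ω[i]? = some x ∧ M x c = 2) →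
      ∃ (ω'' : List B) (g : ℕ → ℕ), CommPath M ω ω'' g ∧ g (i0+1+d) = i0+1 ∧
        ∀ x, x ≤ i0 → g x = x := by
  intro d
  induction d with
  | zero => intro ω i0 _ _; exact ⟨ω, id, CommPath.refl ω, rfl, fun _ _ => rfl⟩
  | succ d ih =>
      intro ω i0 hc hcomm
      have hc0 : ω[(i0+1+d)+1]? = some c := hc
      obtain ⟨x, hx, hxc⟩ := hcomm (i0+1+d) (by omega) (by omega)
      have hstep : SwapStep M ω ((ω.set (i0+1+d) c).set (i0+1+d+1) x) (i0+1+d) :=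
        ⟨x, c, hx, hc0, hxc, rfl⟩
      have hpath1 : CommPath M ω ((ω.set (i0+1+d) c).set (i0+1+d+1) x)
          (swapAt (i0+1+d) ∘ id) := CommPath.step (CommPath.refl ω) hstep
      have htrack := hpath1.track
      have hc' : ((ω.set (i0+1+d) c).set (i0+1+d+1) x)[i0+1+d]? = some c := by
        have h2 := htrack (i0+1+d+1)
        rw [show (_root_.swapAt (i0+1+d) ∘ id) (i0+1+d+1) = i0+1+d by
          simp only [Function.comp_apply, id_eq]; unfold _root_.swapAt; split_ifs <;> omega] at h2
        rw [h2]; exact hc0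
      have hcomm' : ∀ i, i0 < i → i < i0+1+d →
          ∃ y, ((ω.set (i0+1+d) c).set (i0+1+d+1) x)[i]? = some y ∧ M y c = 2 := by
        intro i hi1 hi2
        obtain ⟨y, hy, hyc⟩ := hcomm i hi1 (by omega)
        refine ⟨y, ?_, hyc⟩
        have h2 := htrack i
        rw [show (_root_.swapAt (i0+1+d) ∘ id) i = i by
          simp only [Function.comp_apply, id_eq]; unfold _root_.swapAt; split_ifs <;> omega] at h2
        rw [h2, hy]
      obtain ⟨ω'', g, hpath2, hgj, hgfix⟩ := ih _ i0 hc' hcomm'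
      refine ⟨ω'', g ∘ (swapAt (i0+1+d) ∘ id), hpath1.trans hpath2, ?_, ?_⟩
      · show g ((_root_.swapAt (i0+1+d) ∘ id) (i0+1+(d+1))) = i0+1
        rw [show (_root_.swapAt (i0+1+d) ∘ id) (i0+1+(d+1)) = i0+1+d by
          simp only [Function.comp_apply, id_eq]; unfold _root_.swapAt; split_ifs <;> omega]
        exact hgj
      · intro y hy
        show g ((_root_.swapAt (i0+1+d) ∘ id) y) = y
        rw [show (_root_.swapAt (i0+1+d) ∘ id) y = y by
          simp only [Function.comp_apply, id_eq]; unfold _root_.swapAt; split_ifs <;> omega]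
        exact hgfix y hy

/-- A consecutive pattern `a q a` with `M a q = 3` contradicts full commutativity. -/
lemma fc_no_braid3 {W : Type*} [Group W] {cs : CoxeterSystem M W} {w : W} (hw : FC cs w)
    {ω ω' : List B} {f : ℕ → ℕ} (hred : cs.IsReduced ω) (hprod : cs.wordProd ω = w)
    (hpath : CommPath M ω ω' f) {t : ℕ} {a q : B}
    (ht : 1 ≤ t) (h1 : ω'[t-1]? = some a) (h2 : ω'[t]? = some q) (h3 : ω'[t+1]? = some a)
    (hM : M a q = 3) : False := by
  obtain ⟨t', rfl⟩ : ∃ t', t = t' + 1 := ⟨t - 1, by omega⟩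
  have h1' : ω'[t']? = some a := by simpa using h1
  have hlen : t' + 1 + 1 < ω'.length := (List.getElem?_eq_some_iff.mp h3).1
  have hred' : cs.IsReduced ω' := hpath.isReduced cs hred
  have hw' : cs.wordProd ω' = w := (hpath.wordProd cs).trans hprod
  have e1 : ω'[t']'(by omega) = a := by
    rw [List.getElem?_eq_getElem (show t' < ω'.length by omega)] at h1'
    exact Option.some.inj h1'
  have e2 : ω'[t'+1]'(by omega) = q := by
    rw [List.getElem?_eq_getElem (show t'+1 < ω'.length by omega)] at h2
    exact Option.some.inj h2
  have e3 : ω'[t'+2]'(by omega) = a := by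
    rw [List.getElem?_eq_getElem (show t'+2 < ω'.length by omega)] at h3
    exact Option.some.inj h3
  have hdrop : ω'.drop t' = a :: q :: a :: ω'.drop (t'+3) := by
    rw [List.drop_eq_getElem_cons (show t' < ω'.length by omega),
      List.drop_eq_getElem_cons (show t'+1 < ω'.length by omega),
      List.drop_eq_getElem_cons (show t'+2 < ω'.length by omega)]
    rw [e1, e2, e3]
  have hdec : ω' = ω'.take t' ++ ([a, q, a] ++ ω'.drop (t'+3)) := by
    conv_lhs => rw [← List.take_append_drop t' ω', hdrop]
    rfl
  have hweq : w = cs.wordProd (ω'.take t') * cs.wordProd [a, q, a]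
      * cs.wordProd (ω'.drop (t'+3)) := by
    conv_lhs => rw [← hw', hdec]
    rw [cs.wordProd_append, cs.wordProd_append, mul_assoc]
  have hMqa : M q a = 3 := (M.symmetric q a).trans hM
  have halt : alternatingWord q a (M q a) = [a, q, a] := by
    rw [hMqa]; simp [alternatingWord]
  apply hw
  refine ⟨cs.wordProd (ω'.take t'), cs.wordProd (ω'.drop (t'+3)), q, a, by omega, ?_, ?_⟩
  · rw [halt]; exact hweq
  · rw [halt]
    have hl1 : cs.length (cs.wordProd (ω'.take t')) ≤ t' :=
      le_trans (cs.length_wordProd_le _) (by rw [List.length_take]; omega)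
    have hl2 : cs.length (cs.wordProd [a, q, a]) ≤ 3 := cs.length_wordProd_le [a, q, a]
    have hl3 : cs.length (cs.wordProd (ω'.drop (t'+3))) ≤ ω'.length - (t'+3) :=
      le_trans (cs.length_wordProd_le _) (by rw [List.length_drop])
    have hlw : cs.length w = ω'.length := by rw [← hw']; exact hred'
    have hle : cs.length w ≤ cs.length (cs.wordProd (ω'.take t'))
        + cs.length (cs.wordProd [a, q, a]) + cs.length (cs.wordProd (ω'.drop (t'+3))) := by
      rw [hweq]
      calc cs.length (cs.wordProd (ω'.take t') * cs.wordProd [a, q, a]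
            * cs.wordProd (ω'.drop (t'+3)))
          ≤ cs.length (cs.wordProd (ω'.take t') * cs.wordProd [a, q, a])
            + cs.length (cs.wordProd (ω'.drop (t'+3))) := cs.length_mul_le _ _
        _ ≤ _ := by
            have := cs.length_mul_le (cs.wordProd (ω'.take t')) (cs.wordProd [a, q, a])
            omega
    omega

/-- Both internal occurrences below `p`: impossible. -/
lemma same_side_below {ω ω₁ ω₂ : List B} {f₁ f₂ : ℕ → ℕ} {p r₁ r₂ : ℕ} {a q : B}
    (path₁ : CommPath M ω ω₁ f₁) (path₂ : CommPath M ω ω₂ f₂)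
    (hpa : ω[p]? = some a) (hr₁ : ω[r₁]? = some q) (hr₂ : ω[r₂]? = some q)
    (haq : M a q ≠ 2) (hqq : M q q ≠ 2) (haa : M a a ≠ 2) (hane : a ≠ q)
    (h12 : r₁ < r₂)
    (hs₁ : f₁ p = f₁ r₁ + 1) (hs₂ : f₂ p = f₂ r₂ + 1)
    (hfl₂ : 1 ≤ f₂ r₂) (hl₂ : ω₂[f₂ r₂ - 1]? = some a) : False := by
  have hqa : M q a ≠ 2 := fun h => haq ((M.symmetric a q).trans h)
  obtain ⟨g₂, hg₂l, hg₂r⟩ := path₂.inv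
  set y := g₂ (f₂ r₂ - 1) with hy
  have hfy : f₂ y = f₂ r₂ - 1 := hg₂r _
  have hyω : ω[y]? = some a := by rw [← path₂.track y, hfy]; exact hl₂
  have h12f : f₂ r₁ < f₂ r₂ := (path₂.orderInv hr₁ hr₂ hqq).mpr h12
  have hr₁ne : f₂ r₁ ≠ f₂ r₂ - 1 := by
    intro h
    have : r₁ = y := by rw [← hg₂l r₁, h, hy]
    rw [this, hyω] at hr₁
    exact hane (Option.some.inj hr₁)
  have hr₁y : r₁ < y := by
    have h1 : f₂ r₁ < f₂ y := by omega
    by_contra hcon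
    rcases Nat.lt_or_ge y r₁ with h' | h'
    · have := (path₂.orderInv hyω hr₁ haq).mpr h'
      omega
    · have : r₁ = y := by omega
      rw [this] at h1; omega
  have hyp : y < p := by
    have h1 : f₂ y < f₂ p := by omega
    exact (path₂.orderInv hyω hpa haa).mp h1
  have c1 : f₁ r₁ < f₁ y := (path₁.orderInv hr₁ hyω hqa).mpr hr₁y
  have c2 : f₁ y < f₁ p := (path₁.orderInv hyω hpa haa).mpr hyp
  omega

/-- Both internal occurrences above `p`: impossible. -/
lemma same_side_above {ω ω₁ ω₂ : List B} {f₁ f₂ : ℕ → ℕ} {p r₁ r₂ : ℕ} {a q : B}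
    (path₁ : CommPath M ω ω₁ f₁) (path₂ : CommPath M ω ω₂ f₂)
    (hpa : ω[p]? = some a) (hr₁ : ω[r₁]? = some q) (hr₂ : ω[r₂]? = some q)
    (haq : M a q ≠ 2) (hqq : M q q ≠ 2) (haa : M a a ≠ 2) (hane : a ≠ q)
    (h12 : r₁ < r₂)
    (hs₁ : f₁ p + 1 = f₁ r₁) (hs₂ : f₂ p + 1 = f₂ r₂)
    (hl₁ : ω₁[f₁ r₁ + 1]? = some a) : False := by
  have hqa : M q a ≠ 2 := fun h => haq ((M.symmetric a q).trans h)
  obtain ⟨g₁, hg₁l, hg₁r⟩ := path₁.inv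
  set y := g₁ (f₁ r₁ + 1) with hy
  have hfy : f₁ y = f₁ r₁ + 1 := hg₁r _
  have hyω : ω[y]? = some a := by rw [← path₁.track y, hfy]; exact hl₁
  have h12f : f₁ r₁ < f₁ r₂ := (path₁.orderInv hr₁ hr₂ hqq).mpr h12
  have hr₂ne : f₁ r₂ ≠ f₁ r₁ + 1 := by
    intro h
    have : r₂ = y := by rw [← hg₁l r₂, h, hy]
    rw [this, hyω] at hr₂
    exact hane (Option.some.inj hr₂)
  have hpy : p < y := by
    have h1 : f₁ p < f₁ y := by omega
    exact (path₁.orderInv hpa hyω haa).mp h1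
  have hyr₂ : y < r₂ := by
    have h1 : f₁ y < f₁ r₂ := by omega
    exact (path₁.orderInv hyω hr₂ haq).mp h1
  have c1 : f₂ p < f₂ y := (path₂.orderInv hpa hyω haa).mpr hpy
  have c2 : f₂ y < f₂ r₂ := (path₂.orderInv hyω hr₂ haq).mpr hyr₂
  omega

/-- Opposite sides: `p` is internal. -/
lemma opposite_sides {ω ω₁ ω₂ : List B} {f₁ f₂ : ℕ → ℕ} {p r₁ r₂ : ℕ} {a q : B}
    (path₁ : CommPath M ω ω₁ f₁) (path₂ : CommPath M ω ω₂ f₂)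
    (hpa : ω[p]? = some a)
    (haq : M a q ≠ 2) (h3 : 3 ≤ M a q)
    (hcl : ∀ x : B, M x q ≠ 2 → M a x ≠ 2)
    (hs₁ : f₁ p = f₁ r₁ + 1) (hq₁ : ω₁[f₁ r₁]? = some q)
    (hs₂ : f₂ p + 1 = f₂ r₂) (hq₂ : ω₂[f₂ r₂]? = some q) :
    Internal M ω p := by
  obtain ⟨g₁, hg₁l, hg₁r⟩ := path₁.inv
  have hr₂ω : ω[r₂]? = some q := by rw [← path₂.track r₂]; exact hq₂
  have hpr₂ : p < r₂ := (path₂.orderInv hpa hr₂ω haq).mp (by omega)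
  have hfpr : f₁ p < f₁ r₂ := (path₁.orderInv hpa hr₂ω haq).mpr hpr₂
  set i0 := f₁ p with hi0
  set j := f₁ r₂ with hj
  have hjd : j = i0 + 1 + (j - (i0+1)) := by omega
  have hcj : ω₁[i0 + 1 + (j - (i0+1))]? = some q := by
    rw [← hjd]; rw [path₁.track r₂]; exact hr₂ω
  have hjlen : j < ω₁.length := by
    have := (List.getElem?_eq_some_iff.mp hcj).1; omega
  have hcomm : ∀ i, i0 < i → i < i0 + 1 + (j - (i0+1)) →
      ∃ x, ω₁[i]? = some x ∧ M x q = 2 := by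
    intro i hi1 hi2
    have hilen : i < ω₁.length := by omega
    refine ⟨ω₁[i], List.getElem?_eq_getElem hilen, ?_⟩
    by_contra hxq
    set z := g₁ i with hz
    have hfz : f₁ z = i := hg₁r _
    have hzω : ω[z]? = some ω₁[i] := by
      rw [← path₁.track z, hfz]; exact (List.getElem?_eq_getElem hilen)
    have hpz : p < z := (path₁.orderInv hpa hzω (hcl _ hxq)).mp (by omega)
    have hzr : z < r₂ := (path₁.orderInv hzω hr₂ω hxq).mp (by omega)
    have c1 : f₂ p < f₂ z := (path₂.orderInv hpa hzω (hcl _ hxq)).mpr hpz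
    have c2 : f₂ z < f₂ r₂ := (path₂.orderInv hzω hr₂ω hxq).mpr hzr
    omega
  obtain ⟨ω'', g, pathg, hgj, hgfix⟩ := bubble (j - (i0+1)) ω₁ i0 hcj hcomm
  have hgj2 : g j = i0 + 1 := by rw [hjd]; exact hgj
  have total : CommPath M ω ω'' (g ∘ f₁) := path₁.trans pathg
  have hgp : g (f₁ p) = f₁ p := hgfix _ (le_refl i0)
  refine ⟨ω'', g ∘ f₁, a, q, total, ?_, ?_, ?_, ?_, h3⟩
  · show 1 ≤ g (f₁ p)
    rw [hgp]; omega
  · show ω''[g (f₁ p)]? = some a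
    rw [pathg.track (f₁ p), path₁.track p]; exact hpa
  · show ω''[g (f₁ p) - 1]? = some q
    rw [hgp, show f₁ p - 1 = g (f₁ r₁) by rw [hgfix (f₁ r₁) (by omega)]; omega,
      pathg.track (f₁ r₁)]
    exact hq₁
  · show ω''[g (f₁ p) + 1]? = some q
    rw [hgp, show f₁ p + 1 = g j from hgj2.symm, pathg.track j]
    show ω₁[f₁ r₂]? = some q
    rw [path₁.track r₂]
    exact hr₂ω

lemma genM5_bond {x y : ℕ} (h3 : 3 ≤ genM 5 x y) (hne3 : genM 5 x y ≠ 3) :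
    (x = 0 ∧ y = 1) ∨ (x = 1 ∧ y = 0) := by
  unfold genM at h3 hne3; split_ifs at h3 hne3 <;> omega

lemma genM5_comm0 {x : ℕ} (h : genM 5 x 0 ≠ 2) : x ≤ 1 := by
  by_contra hx
  apply h
  unfold genM
  rw [if_neg (by omega), if_neg (by omega)]

lemma genM5_1x {x : ℕ} (hx : x ≤ 1) : genM 5 1 x ≠ 2 := by
  interval_cases x <;> decide

end Aux

/-- Lemma 3.2.1: in a reduced expression for a fully commutative element of
the Coxeter group of type `H_{n-1}`, every bilateral occurrence of a letter is an occurrence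
of the generator `s₁`. -/
theorem stmt_0 (n : ℕ) (hn : 3 ≤ n) (W : Type) [Group W]
    (cs : CoxeterSystem (Hmat (n-1)) W) (w : W) (hw : FC cs w)
    (ω : List (Fin (n-1))) (hred : cs.IsReduced ω) (hprod : cs.wordProd ω = w)
    (p : ℕ) (hp : Bilateral (Hmat (n-1)) ω p) :
    ω[p]? = some (⟨0, by omega⟩ : Fin (n-1)) := by
  obtain ⟨r₁, r₂, hne, L₁, L₂⟩ := hp
  obtain ⟨hnotInt, -, ω₁, f₁, a₁, q₁, path₁, side₁, hfr₁, hq₁, hlf₁, hrf₁, hp₁, hM₁⟩ := L₁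
  obtain ⟨-, -, ω₂, f₂, a₂, q₂, path₂, side₂, hfr₂, hq₂, hlf₂, hrf₂, hp₂, hM₂⟩ := L₂
  have hpa₁ : ω[p]? = some a₁ := by rw [← path₁.track p]; exact hp₁
  have hpa₂ : ω[p]? = some a₂ := by rw [← path₂.track p]; exact hp₂
  have haeq : a₂ = a₁ := Option.some.inj (hpa₂.symm.trans hpa₁)
  subst haeq
  have hr₁ω : ω[r₁]? = some q₁ := by rw [← path₁.track r₁]; exact hq₁
  have hr₂ω : ω[r₂]? = some q₂ := by rw [← path₂.track r₂]; exact hq₂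
  have hne3₁ : Hmat (n-1) a₂ q₁ ≠ 3 := fun h =>
    fc_no_braid3 hw hred hprod path₁ hfr₁ hlf₁ hq₁ hrf₁ h
  have hne3₂ : Hmat (n-1) a₂ q₂ ≠ 3 := fun h =>
    fc_no_braid3 hw hred hprod path₂ hfr₂ hlf₂ hq₂ hrf₂ h
  have hM₁g : 3 ≤ genM 5 ↑a₂ ↑q₁ := hM₁
  have hM₂g : 3 ≤ genM 5 ↑a₂ ↑q₂ := hM₂
  have hne3₁g : genM 5 ↑a₂ ↑q₁ ≠ 3 := hne3₁
  have hne3₂g : genM 5 ↑a₂ ↑q₂ ≠ 3 := hne3₂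
  have hb₁ := genM5_bond hM₁g hne3₁g
  have hb₂ := genM5_bond hM₂g hne3₂g
  rcases hb₁ with ⟨ha0, hq11⟩ | ⟨ha1, hq10⟩
  · have : a₂ = (⟨0, by omega⟩ : Fin (n-1)) := Fin.ext ha0
    rw [hpa₁, this]
  · exfalso
    rcases hb₂ with ⟨ha0', -⟩ | ⟨-, hq20⟩
    · omega
    · have hq12 : q₂ = q₁ := Fin.ext (by omega)
      subst hq12
      have haqg : genM 5 ↑a₂ ↑q₂ ≠ 2 := by omega
      have haq2 : Hmat (n-1) a₂ q₂ ≠ 2 := haqg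
      have hqq : Hmat (n-1) q₂ q₂ ≠ 2 := by
        rw [(Hmat (n-1)).diagonal]; omega
      have haa : Hmat (n-1) a₂ a₂ ≠ 2 := by
        rw [(Hmat (n-1)).diagonal]; omega
      have hane : a₂ ≠ q₂ := fun h => by rw [h] at ha1; omega
      have hcl : ∀ x : Fin (n-1), Hmat (n-1) x q₂ ≠ 2 → Hmat (n-1) a₂ x ≠ 2 := by
        intro x hx
        have hx' : genM 5 ↑x ↑q₂ ≠ 2 := hx
        rw [hq10] at hx'
        have hx1 : (x : ℕ) ≤ 1 := genM5_comm0 hx'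
        have hres : genM 5 ↑a₂ ↑x ≠ 2 := by rw [ha1]; exact genM5_1x hx1
        exact hres
      rcases side₁ with s1 | s1 <;> rcases side₂ with s2 | s2
      · -- both above
        rcases Nat.lt_trichotomy r₁ r₂ with h | h | h
        · exact same_side_above path₁ path₂ hpa₁ hr₁ω hr₂ω haq2 hqq haa hane h s1 s2 hrf₁
        · exact hne h
        · exact same_side_above path₂ path₁ hpa₁ hr₂ω hr₁ω haq2 hqq haa hane h s2 s1 hrf₂
      · -- r₁ above, r₂ below
        exact hnotInt (opposite_sides path₂ path₁ hpa₁ haq2 hM₁ hcl s2 hq₂ s1 hq₁)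
      · -- r₁ below, r₂ above
        exact hnotInt (opposite_sides path₁ path₂ hpa₁ haq2 hM₁ hcl s1 hq₁ s2 hq₂)
      · -- both below
        rcases Nat.lt_trichotomy r₁ r₂ with h | h | h
        · exact same_side_below path₁ path₂ hpa₁ hr₁ω hr₂ω haq2 hqq haa hane h s1 s2 hfr₂ hlf₂
        · exact hne h
        · exact same_side_below path₂ path₁ hpa₁ hr₂ω hr₁ω haq2 hqq haa hane h s2 s1 hfr₁ hlf₁
end
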